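/- Let q be a prime power and let k ≥ 2 be an even integer. Then there exists a strong blocking set in F_q^k consisting of at most ⌈ k / log_{q^2}( q^4 / (q^3 − q + 1) ) ⌉ · (q+1) pairwise non-proportional nonzero vectors, where log_{q^2} denotes the real logarithm in base q^2. Equivalently, m(k,q) ≤ ⌈ k / log_{q^2}( q^4/(q^3−q+1) ) ⌉ · (q+1), where m(k,q) is the smallest size of a strong blocking set in PG(k−1,q). -/

import Mathlib

open Finset

namespace StrongBlocking

variable {F : Type} [Field F] [Fintype F] [DecidableEq F] {k : ℕ}

/-- The linear functional given by dot product with `w`. -/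
def ell (w : Fin k → F) : (Fin k → F) →ₗ[F] F := ∑ i, w i • LinearMap.proj i

lemma ell_apply (w x : Fin k → F) : ell w x = ∑ i, w i * x i := by
  simp [ell, LinearMap.sum_apply, smul_eq_mul]

lemma ell_zero : ell (0 : Fin k → F) = 0 := by
  ext x; simp [ell_apply]

lemma exists_ell (φ : (Fin k → F) →ₗ[F] F) : ∃ w, ell w = φ := by
  refine ⟨fun i => φ (fun j => if i = j then 1 else 0), ?_⟩
  refine LinearMap.ext fun x => ?_
  rw [LinearMap.pi_apply_eq_sum_univ φ x, ell_apply]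
  exact Finset.sum_congr rfl fun i _ => by rw [smul_eq_mul, mul_comm]

/-- Bad condition on a pair of vectors w.r.t. two functionals. -/
def BadCond (φ ψ : (Fin k → F) →ₗ[F] F) (xy : (Fin k → F) × (Fin k → F)) : Prop :=
  ∀ v ∈ Submodule.span F {xy.1, xy.2}, φ v = 0 → ψ v = 0

noncomputable def badFinset (φ ψ : (Fin k → F) →ₗ[F] F) :
    Finset ((Fin k → F) × (Fin k → F)) :=
  @Finset.filter _ (BadCond φ ψ) (Classical.decPred _) Finset.univ

/-- Bad condition on a 2×2 matrix of scalars. -/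
def badMCond (m : (F × F) × (F × F)) : Prop :=
  ∀ s t : F, s * m.1.1 + t * m.2.1 = 0 → s * m.1.2 + t * m.2.2 = 0

instance : DecidablePred (badMCond (F := F)) := fun m =>
  decidable_of_iff
    (∀ s t : F, s * m.1.1 + t * m.2.1 = 0 → s * m.1.2 + t * m.2.2 = 0) Iff.rfl

lemma card_lin (a c : F) (h : ¬(a = 0 ∧ c = 0)) :
    (univ.filter fun p : F × F => c * p.1 = a * p.2).card ≤ Fintype.card F := by
  by_cases ha : a = 0
  · have hc : c ≠ 0 := fun hc => h ⟨ha, hc⟩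
    calc (univ.filter fun p : F × F => c * p.1 = a * p.2).card
        ≤ (univ : Finset F).card := by
          apply Finset.card_le_card_of_injOn Prod.snd (fun p _ => mem_univ _)
          intro p hp p' hp' hsnd
          simp only [mem_coe, mem_filter, ha, zero_mul, mul_eq_zero, or_iff_right hc] at hp hp'
          exact Prod.ext (hp.2.trans hp'.2.symm) hsnd
      _ = Fintype.card F := Finset.card_univ
  · calc (univ.filter fun p : F × F => c * p.1 = a * p.2).card
        ≤ (univ : Finset F).card := by
          apply Finset.card_le_card_of_injOn Prod.fst (fun p _ => mem_univ _)
          intro p hp p' hp' hfst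
          simp only [mem_coe, mem_filter, true_and] at hp hp'
          refine Prod.ext hfst ?_
          have : a * p.2 = a * p'.2 := by rw [← hp.2, ← hp'.2, hfst]
          exact mul_left_cancel₀ ha this
      _ = Fintype.card F := Finset.card_univ

lemma card_badM :
    (univ.filter (badMCond (F := F))).card ≤
      Fintype.card F ^ 3 - Fintype.card F + 1 := by
  set q := Fintype.card F with hq
  have hq1 : 1 ≤ q := Fintype.card_pos
  -- step 1 : inclusion
  have hsub : (univ.filter (badMCond (F := F))) ⊆
      insert (0 : (F × F) × (F × F))
        (univ.filter fun m : (F × F) × (F × F) =>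
          ¬(m.1.1 = 0 ∧ m.2.1 = 0) ∧ m.2.1 * m.1.2 = m.1.1 * m.2.2) := by
    intro m hm
    have hbad : badMCond m := (Finset.mem_filter.1 hm).2
    by_cases h0 : m.1.1 = 0 ∧ m.2.1 = 0
    · have hb : m.1.2 = 0 := by
        have := hbad 1 0 (by rw [h0.1]; ring)
        simpa using this
      have hd : m.2.2 = 0 := by
        have := hbad 0 1 (by rw [h0.2]; ring)
        simpa using this
      have : m = 0 := by
        have h1 : m.1 = 0 := Prod.ext h0.1 hb
        have h2 : m.2 = 0 := Prod.ext h0.2 hd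
        exact Prod.ext h1 h2
      rw [this]
      exact Finset.mem_insert_self _ _
    · refine Finset.mem_insert_of_mem (Finset.mem_filter.2 ⟨mem_univ _, h0, ?_⟩)
      have h' := hbad m.2.1 (-m.1.1) (by ring)
      linear_combination h'
  -- the "determinant" part
  have hcardt : (univ.filter fun ac : F × F => ¬(ac.1 = 0 ∧ ac.2 = 0)).card = q ^ 2 - 1 := by
    have h1 : (univ.filter fun ac : F × F => ¬(ac.1 = 0 ∧ ac.2 = 0)) =
        univ.erase ((0 : F), (0 : F)) := by
      ext ac
      simp [Prod.ext_iff]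
    rw [h1, Finset.card_erase_of_mem (mem_univ _), card_univ, Fintype.card_prod, sq]
  have step3 : (univ.filter fun m : (F × F) × (F × F) =>
      ¬(m.1.1 = 0 ∧ m.2.1 = 0) ∧ m.2.1 * m.1.2 = m.1.1 * m.2.2).card ≤ (q ^ 2 - 1) * q := by
    set s := univ.filter fun m : (F × F) × (F × F) =>
      ¬(m.1.1 = 0 ∧ m.2.1 = 0) ∧ m.2.1 * m.1.2 = m.1.1 * m.2.2 with hs
    have hmaps : ∀ m ∈ s, (m.1.1, m.2.1) ∈
        (univ.filter fun ac : F × F => ¬(ac.1 = 0 ∧ ac.2 = 0)) := by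
      intro m hm
      simp only [hs, mem_filter] at hm ⊢
      exact ⟨mem_univ _, hm.2.1⟩
    rw [Finset.card_eq_sum_card_fiberwise hmaps]
    have hbound : ∀ ac ∈ (univ.filter fun ac : F × F => ¬(ac.1 = 0 ∧ ac.2 = 0)),
        (s.filter fun m => (m.1.1, m.2.1) = ac).card ≤ q := by
      intro ac hac
      have hac' : ¬(ac.1 = 0 ∧ ac.2 = 0) := (mem_filter.1 hac).2
      refine le_trans ?_ (card_lin ac.1 ac.2 hac')
      apply Finset.card_le_card_of_injOn (fun m => (m.1.2, m.2.2))
      · intro m hm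
        simp only [hs, mem_coe, mem_filter, Prod.ext_iff] at hm
        obtain ⟨⟨_, _, heq⟩, ha, hc⟩ := hm
        refine mem_filter.2 ⟨mem_univ _, ?_⟩
        rw [← ha, ← hc]
        exact heq
      · intro m hm m' hm' he
        simp only [mem_coe, mem_filter, Prod.ext_iff] at hm hm'
        obtain ⟨-, ha, hc⟩ := hm
        obtain ⟨-, ha', hc'⟩ := hm'
        have he' : (m.1.2, m.2.2) = (m'.1.2, m'.2.2) := he
        obtain ⟨h1, h2⟩ := Prod.mk.injEq _ _ _ _ ▸ he'
        exact Prod.ext (Prod.ext (ha.trans ha'.symm) h1) (Prod.ext (hc.trans hc'.symm) h2)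
    calc ∑ ac ∈ (univ.filter fun ac : F × F => ¬(ac.1 = 0 ∧ ac.2 = 0)),
          (s.filter fun m => (m.1.1, m.2.1) = ac).card
        ≤ (univ.filter fun ac : F × F => ¬(ac.1 = 0 ∧ ac.2 = 0)).card • q :=
          Finset.sum_le_card_nsmul _ _ _ hbound
      _ = (q ^ 2 - 1) * q := by rw [hcardt, smul_eq_mul]
  have hle : (univ.filter (badMCond (F := F))).card ≤ 1 + (q ^ 2 - 1) * q := by
    calc (univ.filter (badMCond (F := F))).card
        ≤ (insert (0 : (F × F) × (F × F))
            (univ.filter fun m : (F × F) × (F × F) =>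
              ¬(m.1.1 = 0 ∧ m.2.1 = 0) ∧ m.2.1 * m.1.2 = m.1.1 * m.2.2)).card :=
          Finset.card_le_card hsub
      _ ≤ (univ.filter fun m : (F × F) × (F × F) =>
              ¬(m.1.1 = 0 ∧ m.2.1 = 0) ∧ m.2.1 * m.1.2 = m.1.1 * m.2.2).card + 1 :=
          Finset.card_insert_le _ _
      _ ≤ 1 + (q ^ 2 - 1) * q := by omega
  have h3 : (q ^ 2 - 1) * q = q ^ 3 - q := by
    rw [Nat.sub_mul, one_mul, ← pow_succ]
  have hq3 : q ≤ q ^ 3 := Nat.le_self_pow (by norm_num) q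
  omega


open Module in
lemma card_ker_pair_le (φ ψ : (Fin k → F) →ₗ[F] F) (hφ : φ ≠ 0)
    (h : ¬ LinearMap.ker φ ≤ LinearMap.ker ψ) (ab : F × F) :
    (univ.filter fun x : Fin k → F => (φ x, ψ x) = ab).card ≤
      Fintype.card F ^ (k - 2) := by
  classical
  rcases Finset.eq_empty_or_nonempty
      (univ.filter fun x : Fin k → F => (φ x, ψ x) = ab) with he | ⟨x₀, hx₀⟩
  · simp [he]
  · obtain ⟨-, hx₀'⟩ := mem_filter.1 hx₀
    have hx1 : φ x₀ = ab.1 := by rw [← hx₀']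
    have hx2 : ψ x₀ = ab.2 := by rw [← hx₀']
    set K := LinearMap.ker φ ⊓ LinearMap.ker ψ with hK
    have hstep : (univ.filter fun x : Fin k → F => (φ x, ψ x) = ab).card ≤
        (univ.filter fun z : Fin k → F => z ∈ K).card := by
      apply Finset.card_le_card_of_injOn (fun x => x - x₀)
      · intro x hx
        obtain ⟨-, hx'⟩ := mem_filter.1 hx
        have h1 : φ x = ab.1 := by rw [← hx']
        have h2 : ψ x = ab.2 := by rw [← hx']
        refine mem_filter.2 ⟨mem_univ _, Submodule.mem_inf.2 ⟨?_, ?_⟩⟩ <;>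
          simp [LinearMap.mem_ker, map_sub, h1, h2, hx1, hx2]
      · intro x _ y _ hxy
        exact sub_left_inj.mp hxy
    have hcardK : (univ.filter fun z : Fin k → F => z ∈ K).card = Fintype.card ↥K :=
      (Fintype.card_subtype _).symm
    obtain ⟨x, hxφ, hxψ⟩ := SetLike.not_le_iff_exists.1 h
    have hKlt : K < LinearMap.ker φ :=
      lt_of_le_of_ne inf_le_left
        (fun e => hxψ (Submodule.mem_inf.1 ((e.symm ▸ hxφ) : x ∈ K)).2)
    have hker_lt_top : LinearMap.ker φ < ⊤ := by
      rcases DFunLike.ne_iff.1 hφ with ⟨u, hu⟩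
      refine lt_top_iff_ne_top.2 (fun e => hu ?_)
      have : u ∈ LinearMap.ker φ := e.symm ▸ Submodule.mem_top
      simpa [LinearMap.mem_ker] using this
    have h1 : finrank F ↥(LinearMap.ker φ) < k := by
      have := Submodule.finrank_lt_finrank_of_lt hker_lt_top
      rwa [finrank_top, Module.finrank_fintype_fun_eq_card, Fintype.card_fin] at this
    have h2 : finrank F ↥K < finrank F ↥(LinearMap.ker φ) :=
      Submodule.finrank_lt_finrank_of_lt hKlt
    have h3 : finrank F ↥K ≤ k - 2 := by omega
    calc (univ.filter fun x : Fin k → F => (φ x, ψ x) = ab).card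
        ≤ (univ.filter fun z : Fin k → F => z ∈ K).card := hstep
      _ = Fintype.card ↥K := hcardK
      _ = Fintype.card F ^ finrank F ↥K := card_eq_pow_finrank (K := F)
      _ ≤ Fintype.card F ^ (k - 2) :=
          Nat.pow_le_pow_right Fintype.card_pos h3

lemma badCond_iff (φ ψ : (Fin k → F) →ₗ[F] F)
    (xy : (Fin k → F) × (Fin k → F)) :
    BadCond φ ψ xy ↔ badMCond ((φ xy.1, ψ xy.1), (φ xy.2, ψ xy.2)) := by
  constructor
  · intro hb s t hst
    have hv : s • xy.1 + t • xy.2 ∈ Submodule.span F {xy.1, xy.2} :=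
      Submodule.mem_span_pair.2 ⟨s, t, rfl⟩
    have hφv : φ (s • xy.1 + t • xy.2) = 0 := by
      simpa [map_add, map_smul, smul_eq_mul] using hst
    have := hb _ hv hφv
    simpa [map_add, map_smul, smul_eq_mul] using this
  · intro hb v hv hφv
    obtain ⟨s, t, rfl⟩ := Submodule.mem_span_pair.1 hv
    have := hb s t (by simpa [map_add, map_smul, smul_eq_mul] using hφv)
    simpa [map_add, map_smul, smul_eq_mul] using this

lemma card_badFinset_le (φ ψ : (Fin k → F) →ₗ[F] F) (hφ : φ ≠ 0)
    (h : ¬ LinearMap.ker φ ≤ LinearMap.ker ψ) :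
    (badFinset φ ψ).card ≤
      (Fintype.card F ^ 3 - Fintype.card F + 1) * (Fintype.card F ^ (k - 2)) ^ 2 := by
  classical
  set q := Fintype.card F with hq
  set ev : (Fin k → F) × (Fin k → F) → (F × F) × (F × F) :=
    fun xy => ((φ xy.1, ψ xy.1), (φ xy.2, ψ xy.2)) with hev
  have hmaps : ∀ xy ∈ badFinset φ ψ, ev xy ∈ univ.filter (badMCond (F := F)) := by
    intro xy hxy
    have : BadCond φ ψ xy := by
      simpa [badFinset, Finset.mem_filter] using hxy
    exact mem_filter.2 ⟨mem_univ _, (badCond_iff φ ψ xy).1 this⟩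
  rw [Finset.card_eq_sum_card_fiberwise hmaps]
  have hfiber : ∀ m ∈ univ.filter (badMCond (F := F)),
      ((badFinset φ ψ).filter fun xy => ev xy = m).card ≤ (q ^ (k - 2)) ^ 2 := by
    intro m _
    have hsub : ((badFinset φ ψ).filter fun xy => ev xy = m) ⊆
        (univ.filter fun x : Fin k → F => (φ x, ψ x) = m.1) ×ˢ
          (univ.filter fun y : Fin k → F => (φ y, ψ y) = m.2) := by
      intro xy hxy
      have hm : ev xy = m := (mem_filter.1 hxy).2
      rw [Finset.mem_product]
      constructor <;> refine mem_filter.2 ⟨mem_univ _, ?_⟩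
      · exact congrArg Prod.fst hm
      · exact congrArg Prod.snd hm
    calc ((badFinset φ ψ).filter fun xy => ev xy = m).card
        ≤ _ := Finset.card_le_card hsub
      _ = (univ.filter fun x : Fin k → F => (φ x, ψ x) = m.1).card *
            (univ.filter fun y : Fin k → F => (φ y, ψ y) = m.2).card :=
          Finset.card_product _ _
      _ ≤ q ^ (k - 2) * q ^ (k - 2) :=
          Nat.mul_le_mul (card_ker_pair_le φ ψ hφ h m.1) (card_ker_pair_le φ ψ hφ h m.2)
      _ = (q ^ (k - 2)) ^ 2 := (sq _).symm
  calc ∑ m ∈ univ.filter (badMCond (F := F)),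
        ((badFinset φ ψ).filter fun xy => ev xy = m).card
      ≤ (univ.filter (badMCond (F := F))).card • ((q ^ (k - 2)) ^ 2) :=
        Finset.sum_le_card_nsmul _ _ _ hfiber
    _ ≤ (q ^ 3 - q + 1) * (q ^ (k - 2)) ^ 2 := by
        rw [smul_eq_mul]
        exact Nat.mul_le_mul_right _ card_badM


lemma ell_ne_zero {w : Fin k → F} (hw : w ≠ 0) : ell w ≠ 0 := by
  obtain ⟨j, hj⟩ := Function.ne_iff.1 hw
  intro he
  apply hj
  have := congrArg (fun f : (Fin k → F) →ₗ[F] F => f (fun i => if i = j then 1 else 0)) he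
  simpa [ell_apply, Finset.sum_ite_eq' Finset.univ j] using this

lemma exists_good_tuple (N : ℕ)
    (hN : (Fintype.card F ^ k - 1) * Fintype.card F ^ k *
        ((Fintype.card F ^ 3 - Fintype.card F + 1) * (Fintype.card F ^ (k - 2)) ^ 2) ^ N
        < (Fintype.card F ^ k * Fintype.card F ^ k) ^ N) :
    ∃ t : Fin N → (Fin k → F) × (Fin k → F),
      ∀ φ ψ : (Fin k → F) →ₗ[F] F, φ ≠ 0 →
        ¬ (LinearMap.ker φ ≤ LinearMap.ker ψ) →
          ∃ i, ∃ v ∈ Submodule.span F {(t i).1, (t i).2}, φ v = 0 ∧ ψ v ≠ 0 := by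
  classical
  set q := Fintype.card F with hq
  set S : Finset ((Fin k → F) × (Fin k → F)) := univ.filter fun w =>
    w.1 ≠ 0 ∧ ¬ (LinearMap.ker (ell w.1) ≤ LinearMap.ker (ell w.2)) with hS
  set bad : Finset (Fin N → (Fin k → F) × (Fin k → F)) := univ.filter fun t =>
    ∃ w ∈ S, ∀ i, t i ∈ badFinset (ell w.1) (ell w.2) with hbad
  have hsubset : bad ⊆ S.biUnion fun w =>
      univ.filter fun t => ∀ i, t i ∈ badFinset (ell w.1) (ell w.2) := by
    intro t ht
    obtain ⟨w, hwS, hw⟩ := (mem_filter.1 ht).2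
    exact Finset.mem_biUnion.2 ⟨w, hwS, mem_filter.2 ⟨mem_univ _, hw⟩⟩
  have hinner : ∀ w ∈ S,
      (univ.filter fun t : Fin N → (Fin k → F) × (Fin k → F) => ∀ i, t i ∈ badFinset (ell w.1) (ell w.2)).card ≤
        ((q ^ 3 - q + 1) * (q ^ (k - 2)) ^ 2) ^ N := by
    intro w hwS
    obtain ⟨-, hw1, hwker⟩ := mem_filter.1 hwS
    have heq : (univ.filter fun t : Fin N → (Fin k → F) × (Fin k → F) => ∀ i, t i ∈ badFinset (ell w.1) (ell w.2))
        = Fintype.piFinset fun _ : Fin N => badFinset (ell w.1) (ell w.2) := by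
      ext t
      simp [Fintype.mem_piFinset]
    rw [heq, Fintype.card_piFinset_const]
    exact Nat.pow_le_pow_left (card_badFinset_le _ _ (ell_ne_zero hw1) hwker) N
  have hScard : S.card ≤ (q ^ k - 1) * q ^ k := by
    have hsub2 : S ⊆ (univ.filter fun x : Fin k → F => x ≠ 0) ×ˢ univ := by
      intro w hw
      rw [Finset.mem_product]
      exact ⟨mem_filter.2 ⟨mem_univ _, (mem_filter.1 hw).2.1⟩, mem_univ _⟩
    calc S.card ≤ _ := Finset.card_le_card hsub2
      _ = (univ.filter fun x : Fin k → F => x ≠ 0).card * (univ : Finset (Fin k → F)).card :=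
          Finset.card_product _ _
      _ = (q ^ k - 1) * q ^ k := by
          rw [Finset.filter_ne', Finset.card_erase_of_mem (mem_univ _), card_univ,
            Fintype.card_pi_const, ← hq]
  have hbadcard : bad.card <
      Fintype.card (Fin N → (Fin k → F) × (Fin k → F)) := by
    calc bad.card ≤ ∑ w ∈ S,
          (univ.filter fun t : Fin N → (Fin k → F) × (Fin k → F) =>
            ∀ i, t i ∈ badFinset (ell w.1) (ell w.2)).card :=
          le_trans (Finset.card_le_card hsubset) (Finset.card_biUnion_le)
      _ ≤ S.card • (((q ^ 3 - q + 1) * (q ^ (k - 2)) ^ 2) ^ N) :=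
          Finset.sum_le_card_nsmul _ _ _ hinner
      _ ≤ ((q ^ k - 1) * q ^ k) * (((q ^ 3 - q + 1) * (q ^ (k - 2)) ^ 2) ^ N) := by
          rw [smul_eq_mul]
          exact Nat.mul_le_mul_right _ hScard
      _ < (q ^ k * q ^ k) ^ N := hN
      _ = Fintype.card (Fin N → (Fin k → F) × (Fin k → F)) := by
          rw [Fintype.card_pi_const, Fintype.card_prod, Fintype.card_pi_const, ← hq]
  obtain ⟨t, ht⟩ : ∃ t : Fin N → (Fin k → F) × (Fin k → F), t ∉ bad := by
    by_contra hc
    push_neg at hc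
    have : (univ : Finset (Fin N → (Fin k → F) × (Fin k → F))) ⊆ bad := fun t _ => hc t
    have := Finset.card_le_card this
    rw [card_univ] at this
    omega
  refine ⟨t, ?_⟩
  intro φ ψ hφ hker
  obtain ⟨w₁, hw₁⟩ := exists_ell φ
  obtain ⟨w₂, hw₂⟩ := exists_ell ψ
  have hw₁0 : w₁ ≠ 0 := by
    intro e
    exact hφ (by rw [← hw₁, e, ell_zero])
  have hwS : (w₁, w₂) ∈ S := by
    refine mem_filter.2 ⟨mem_univ _, hw₁0, ?_⟩
    simpa [hw₁, hw₂] using hker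
  have ht' : ¬ ∃ w ∈ S, ∀ i, t i ∈ badFinset (ell w.1) (ell w.2) := by
    intro hcon
    exact ht (mem_filter.2 ⟨mem_univ _, hcon⟩)
  push_neg at ht'
  obtain ⟨i, hi⟩ := ht' (w₁, w₂) hwS
  have hnotbad : ¬ BadCond φ ψ (t i) := by
    intro hb
    apply hi
    simp only [badFinset, Finset.mem_filter]
    exact ⟨mem_univ _, by simpa [hw₁, hw₂] using hb⟩
  rw [BadCond] at hnotbad
  push_neg at hnotbad
  obtain ⟨v, hv, hφv, hψv⟩ := hnotbad
  exact ⟨i, v, hv, hφv, hψv⟩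


lemma exists_sep {T : Submodule F (Fin k → F)} {x : Fin k → F} (hx : x ∉ T) :
    ∃ ψ : (Fin k → F) →ₗ[F] F, T ≤ LinearMap.ker ψ ∧ ψ x ≠ 0 := by
  have hπx : T.mkQ x ≠ 0 := by
    simpa [Submodule.mkQ_apply, Submodule.Quotient.mk_eq_zero] using hx
  obtain ⟨f, hf⟩ : ∃ f : Module.Dual F ((Fin k → F) ⧸ T), f (T.mkQ x) ≠ 0 := by
    by_contra hc
    push_neg at hc
    exact hπx ((Module.forall_dual_apply_eq_zero_iff F _).1 hc)
  refine ⟨f.comp T.mkQ, ?_, hf⟩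
  intro y hy
  have hy0 : T.mkQ y = 0 := by
    simpa [Submodule.mkQ_apply, Submodule.Quotient.mk_eq_zero] using hy
  simp [LinearMap.mem_ker, hy0]

open Module in
lemma exists_hyperplane_ker (hk : 1 ≤ k) {H : Submodule F (Fin k → F)}
    (hH : finrank F H = k - 1) :
    ∃ φ : (Fin k → F) →ₗ[F] F, LinearMap.ker φ = H ∧ φ ≠ 0 := by
  have hfr : finrank F (Fin k → F) = k := by
    rw [Module.finrank_fintype_fun_eq_card, Fintype.card_fin]
  have hne : H ≠ ⊤ := by
    intro e
    rw [e, finrank_top, hfr] at hH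
    omega
  obtain ⟨x, hx⟩ : ∃ x, x ∉ H := by
    by_contra hc
    push_neg at hc
    exact hne (Submodule.eq_top_iff'.2 hc)
  obtain ⟨ψ, hTle, hψx⟩ := exists_sep hx
  have hψ0 : ψ ≠ 0 := fun e => hψx (by rw [e]; rfl)
  have hkerlt : LinearMap.ker ψ < ⊤ := lt_top_iff_ne_top.2 (fun e => hψx (by
    have : x ∈ LinearMap.ker ψ := e.symm ▸ Submodule.mem_top
    simpa [LinearMap.mem_ker] using this))
  have h1 : finrank F ↥(LinearMap.ker ψ) < k := by
    have := Submodule.finrank_lt_finrank_of_lt hkerlt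
    rwa [finrank_top, hfr] at this
  have h2 : k - 1 ≤ finrank F ↥(LinearMap.ker ψ) := hH ▸ Submodule.finrank_mono hTle
  have hEq : H = LinearMap.ker ψ := Submodule.eq_of_le_of_finrank_eq hTle (by omega)
  exact ⟨ψ, hEq.symm, hψ0⟩

lemma nat_cancel_key : ∀ a b : ℕ, 2 ≤ a → b * (a - 1) ≤ a * a - 1 → b ≤ a + 1 := by
  intro a b ha hb
  by_contra hc
  push_neg at hc
  have h1 : (a + 2) * (a - 1) ≤ b * (a - 1) := Nat.mul_le_mul_right _ hc
  obtain ⟨m, rfl⟩ : ∃ m, a = m + 2 := ⟨a - 2, by omega⟩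
  have e0 : m + 2 - 1 = m + 1 := by omega
  rw [e0] at h1 hb
  have e1 : (m + 2 + 2) * (m + 1) = m * m + 5 * m + 4 := by ring
  have e2 : (m + 2) * (m + 2) = m * m + 4 * m + 4 := by ring
  omega

open scoped LinearAlgebra.Projectivization in
open Module Projectivization in
lemma exists_B (hq2 : 2 ≤ Fintype.card F) (hk : 2 ≤ k) {N : ℕ}
    (t : Fin N → (Fin k → F) × (Fin k → F))
    (ht : ∀ φ ψ : (Fin k → F) →ₗ[F] F, φ ≠ 0 →
      ¬ (LinearMap.ker φ ≤ LinearMap.ker ψ) →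
        ∃ i, ∃ v ∈ Submodule.span F {(t i).1, (t i).2}, φ v = 0 ∧ ψ v ≠ 0) :
    ∃ B : Finset (Fin k → F),
      B.card ≤ N * (Fintype.card F + 1) ∧
      (∀ u ∈ B, u ≠ 0) ∧
      (∀ u ∈ B, ∀ w ∈ B, u ≠ w → ∀ c : F, u ≠ c • w) ∧
      (∀ H : Submodule F (Fin k → F), finrank F H = k - 1 →
        Submodule.span F ((B : Set (Fin k → F)) ∩ (H : Set (Fin k → F))) = H) := by
  classical
  set s : Fin N → Finset (Fin k → F) := fun i =>
    univ.filter fun v => v ∈ Submodule.span F {(t i).1, (t i).2} ∧ v ≠ 0 with hs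
  have hsmem : ∀ {i : Fin N} {v : Fin k → F}, v ∈ s i →
      v ∈ Submodule.span F {(t i).1, (t i).2} ∧ v ≠ 0 :=
    fun {i v} hv => (Finset.mem_filter.1 hv).2
  set pts : Fin N → Finset (ℙ F (Fin k → F)) := fun i =>
    (s i).attach.image fun v => Projectivization.mk F v.1 (hsmem v.2).2 with hpts
  set P : Finset (ℙ F (Fin k → F)) := (univ : Finset (Fin N)).biUnion pts with hP
  refine ⟨P.image Projectivization.rep, ?_, ?_, ?_, ?_⟩
  · -- cardinality bound
    have hpcard : ∀ i, (pts i).card ≤ Fintype.card F + 1 := by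
      intro i
      have hscard : (s i).card + 1 ≤ Fintype.card F * Fintype.card F := by
        have hsub : insert (0 : Fin k → F) (s i) ⊆ (univ.filter fun v : Fin k → F =>
            v ∈ Submodule.span F {(t i).1, (t i).2}) := by
          intro v hv
          rcases Finset.mem_insert.1 hv with rfl | hv
          · exact mem_filter.2 ⟨mem_univ _, Submodule.zero_mem _⟩
          · exact mem_filter.2 ⟨mem_univ _, (hsmem hv).1⟩
        have h0not : (0 : Fin k → F) ∉ s i := by
          intro h0
          exact (hsmem h0).2 rfl
        have hW : (univ.filter fun v : Fin k → F =>
            v ∈ Submodule.span F {(t i).1, (t i).2}).card ≤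
              Fintype.card F * Fintype.card F := by
          rw [← Fintype.card_subtype]
          have hsurj : Function.Surjective
              (fun p : F × F =>
                (⟨p.1 • (t i).1 + p.2 • (t i).2,
                  Submodule.add_mem _
                    (Submodule.smul_mem _ _ (Submodule.subset_span (by simp)))
                    (Submodule.smul_mem _ _ (Submodule.subset_span (by simp)))⟩ :
                  {v : Fin k → F // v ∈ Submodule.span F {(t i).1, (t i).2}})) := by
            rintro ⟨z, hz⟩
            obtain ⟨a, b, hab⟩ := Submodule.mem_span_pair.1 hz
            exact ⟨(a, b), Subtype.ext hab⟩
          calc Fintype.card {v : Fin k → F // v ∈ Submodule.span F {(t i).1, (t i).2}}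
              ≤ Fintype.card (F × F) := Fintype.card_le_of_surjective _ hsurj
            _ = Fintype.card F * Fintype.card F := Fintype.card_prod _ _
        calc (s i).card + 1 = (insert (0 : Fin k → F) (s i)).card :=
              (Finset.card_insert_of_notMem h0not).symm
          _ ≤ _ := Finset.card_le_card hsub
          _ ≤ Fintype.card F * Fintype.card F := hW
      have hfib : (s i).card = ∑ p ∈ pts i,
          ((s i).attach.filter
            (fun v => Projectivization.mk F v.1 (hsmem v.2).2 = p)).card := by
        rw [← Finset.card_attach]
        exact Finset.card_eq_sum_card_fiberwise
          (fun v _ => Finset.mem_image_of_mem _ (Finset.mem_attach _ v))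
      have hfibge : ∀ p ∈ pts i, Fintype.card F - 1 ≤
          ((s i).attach.filter
            (fun v => Projectivization.mk F v.1 (hsmem v.2).2 = p)).card := by
        intro p hp
        obtain ⟨v₀, -, hv₀⟩ := Finset.mem_image.1 hp
        have hv₀W := (hsmem v₀.2).1
        have hv₀0 := (hsmem v₀.2).2
        have hmem : ∀ c : Fˣ, (c : F) • v₀.1 ∈ s i := by
          intro c
          refine mem_filter.2 ⟨mem_univ _, Submodule.smul_mem _ _ hv₀W,
            smul_ne_zero (Units.ne_zero c) hv₀0⟩
        have hinj := Finset.card_le_card_of_injOn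
          (f := fun c : Fˣ => (⟨(c : F) • v₀.1, hmem c⟩ : {x // x ∈ s i}))
          (s := (univ : Finset Fˣ))
          (t := (s i).attach.filter
            (fun v => Projectivization.mk F v.1 (hsmem v.2).2 = p))
          (by
            intro c _
            refine mem_filter.2 ⟨Finset.mem_attach _ _, ?_⟩
            have : Projectivization.mk F ((c : F) • v₀.1)
                (smul_ne_zero (Units.ne_zero c) hv₀0) =
                Projectivization.mk F v₀.1 hv₀0 :=
              (Projectivization.mk_eq_mk_iff F _ _ _ _).2 ⟨c, by rw [Units.smul_def]⟩
            exact this.trans hv₀)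
          (by
            intro c _ c' _ hcc
            have h1 : (c : F) • v₀.1 = (c' : F) • v₀.1 :=
              congrArg Subtype.val hcc
            have h2 : ((c : F) - (c' : F)) • v₀.1 = 0 := by
              rw [sub_smul, h1, sub_self]
            rcases smul_eq_zero.1 h2 with h3 | h3
            · exact Units.ext (by linear_combination h3)
            · exact absurd h3 hv₀0)
        rw [card_univ, Fintype.card_units] at hinj
        exact hinj
      have hsum : (pts i).card * (Fintype.card F - 1) ≤ (s i).card := by
        rw [hfib]
        have := Finset.card_nsmul_le_sum (pts i) _ _ hfibge
        rwa [smul_eq_mul] at this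
      exact nat_cancel_key (Fintype.card F) (pts i).card hq2 (le_trans hsum (by omega))
    calc (P.image Projectivization.rep).card ≤ P.card := Finset.card_image_le
      _ ≤ ∑ i : Fin N, (pts i).card := Finset.card_biUnion_le
      _ ≤ ∑ _i : Fin N, (Fintype.card F + 1) :=
          Finset.sum_le_sum (fun i _ => hpcard i)
      _ = N * (Fintype.card F + 1) := by
          rw [Finset.sum_const, card_univ, Fintype.card_fin, smul_eq_mul]
  · intro u hu
    obtain ⟨p, -, rfl⟩ := Finset.mem_image.1 hu
    exact Projectivization.rep_nonzero p
  · intro u hu w hw huw c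
    intro hc
    obtain ⟨p, -, rfl⟩ := Finset.mem_image.1 hu
    obtain ⟨p', -, rfl⟩ := Finset.mem_image.1 hw
    have hc0 : c ≠ 0 := by
      intro e
      rw [e, zero_smul] at hc
      exact Projectivization.rep_nonzero p hc
    have hmk : Projectivization.mk F p.rep (rep_nonzero p) =
        Projectivization.mk F p'.rep (rep_nonzero p') := by
      rw [Projectivization.mk_eq_mk_iff]
      exact ⟨Units.mk0 c hc0, by rw [Units.smul_def, Units.val_mk0, ← hc]⟩
    rw [Projectivization.mk_rep, Projectivization.mk_rep] at hmk
    exact huw (by rw [hmk])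
  · intro H hH
    obtain ⟨φ, hφker, hφ0⟩ := exists_hyperplane_ker (by omega) hH
    set T := Submodule.span F
      ((↑(P.image Projectivization.rep) : Set (Fin k → F)) ∩ (H : Set (Fin k → F))) with hT
    have hTle : T ≤ H := Submodule.span_le.2 Set.inter_subset_right
    by_contra hne
    have hlt : T < H := lt_of_le_of_ne hTle hne
    obtain ⟨w, hwH, hwT⟩ := (SetLike.lt_iff_le_and_exists.1 hlt).2
    obtain ⟨ψ, hTψ, hψw⟩ := exists_sep hwT
    have hker : ¬ (LinearMap.ker φ ≤ LinearMap.ker ψ) := by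
      intro hle
      have hwker : w ∈ LinearMap.ker φ := hφker.symm ▸ hwH
      exact hψw (by simpa [LinearMap.mem_ker] using hle hwker)
    obtain ⟨i, v, hv, hφv, hψv⟩ := ht φ ψ hφ0 hker
    have hv0 : v ≠ 0 := fun e => hψv (by rw [e, map_zero])
    have hvs : v ∈ s i := mem_filter.2 ⟨mem_univ _, hv, hv0⟩
    have hpmem : Projectivization.mk F v hv0 ∈ pts i :=
      Finset.mem_image.2 ⟨⟨v, hvs⟩, Finset.mem_attach _ _, rfl⟩
    have hpP : Projectivization.mk F v hv0 ∈ P :=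
      Finset.mem_biUnion.2 ⟨i, mem_univ _, hpmem⟩
    have hrepB : (Projectivization.mk F v hv0).rep ∈ P.image Projectivization.rep :=
      Finset.mem_image_of_mem _ hpP
    obtain ⟨a, ha⟩ := Projectivization.exists_smul_eq_mk_rep F v hv0
    have hvH : v ∈ H := hφker ▸ (LinearMap.mem_ker.2 hφv)
    have hrepH : (Projectivization.mk F v hv0).rep ∈ H := by
      rw [← ha, Units.smul_def]
      exact H.smul_mem _ hvH
    have hrepT : (Projectivization.mk F v hv0).rep ∈ T :=
      Submodule.subset_span ⟨hrepB, hrepH⟩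
    have hψrep : ψ (Projectivization.mk F v hv0).rep = 0 := by
      simpa [LinearMap.mem_ker] using hTψ hrepT
    rw [← ha, Units.smul_def, map_smul, smul_eq_mul] at hψrep
    exact hψv ((mul_eq_zero.1 hψrep).resolve_left (Units.ne_zero a))

end StrongBlocking

/-- For even `k`, there is a strong blocking set in `F_q^k` of at most
`⌈k / log_{q^2}(q^4/(q^3-q+1))⌉ · (q+1)` pairwise non-proportional nonzero vectors,
i.e. `m(k,q) ≤ ⌈k / log_{q^2}(q^4/(q^3-q+1))⌉ · (q+1)`. -/
theorem stmt_13 (q k : ℕ) (hq : IsPrimePow q) (hk : 2 ≤ k) (hkeven : Even k)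
    (F : Type) [Field F] [Fintype F] (hcard : Fintype.card F = q) :
    ∃ B : Finset (Fin k → F),
      (B.card : ℤ) ≤ ⌈(k : ℝ) /
          Real.logb ((q : ℝ) ^ 2) ((q : ℝ) ^ 4 / ((q : ℝ) ^ 3 - q + 1))⌉ * (q + 1) ∧
      (∀ u ∈ B, u ≠ 0) ∧
      (∀ u ∈ B, ∀ w ∈ B, u ≠ w → ∀ c : F, u ≠ c • w) ∧
      (∀ H : Submodule F (Fin k → F), Module.finrank F H = k - 1 →
        Submodule.span F ((B : Set (Fin k → F)) ∩ (H : Set (Fin k → F))) = H) := by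
  letI : DecidableEq F := Classical.decEq F
  have hq2 : 2 ≤ q := hq.two_le
  have hqR : (2 : ℝ) ≤ (q : ℝ) := by exact_mod_cast hq2
  set L := Real.logb ((q : ℝ) ^ 2) ((q : ℝ) ^ 4 / ((q : ℝ) ^ 3 - q + 1)) with hL
  have hden_pos : (0 : ℝ) < (q : ℝ) ^ 3 - q + 1 := by nlinarith
  have hden_lt : (q : ℝ) ^ 3 - q + 1 < (q : ℝ) ^ 4 := by nlinarith
  have harg : 1 < (q : ℝ) ^ 4 / ((q : ℝ) ^ 3 - q + 1) := (one_lt_div hden_pos).2 hden_lt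
  have hbase : 1 < (q : ℝ) ^ 2 := by nlinarith
  have hLpos : 0 < L := Real.logb_pos hbase harg
  set N : ℕ := (⌈(k : ℝ) / L⌉).toNat with hN
  have hkR : (0 : ℝ) < (k : ℝ) := by
    have : (0 : ℕ) < k := by omega
    exact_mod_cast this
  have hceil_pos : 0 < ⌈(k : ℝ) / L⌉ := Int.ceil_pos.2 (div_pos hkR hLpos)
  have hNZ : (N : ℤ) = ⌈(k : ℝ) / L⌉ := Int.toNat_of_nonneg hceil_pos.le
  have hNge : (k : ℝ) / L ≤ (N : ℝ) := by
    have h1 := Int.le_ceil ((k : ℝ) / L)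
    rw [← hNZ] at h1
    exact_mod_cast h1
  set r : ℝ := ((q : ℝ) ^ 3 - q + 1) / (q : ℝ) ^ 4 with hr
  have hq4 : (0 : ℝ) < (q : ℝ) ^ 4 := by positivity
  have hr0 : 0 < r := div_pos hden_pos hq4
  have hr1 : r < 1 := (div_lt_one hq4).2 hden_lt
  have hlogb_pos : 0 < Real.log ((q : ℝ) ^ 2) := Real.log_pos hbase
  have hAr : (q : ℝ) ^ 4 / ((q : ℝ) ^ 3 - q + 1) = r⁻¹ := by
    rw [hr, inv_div]
  have hlogr : L * Real.log ((q : ℝ) ^ 2) = -Real.log r := by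
    rw [hL, hAr, Real.logb, div_mul_cancel₀ _ (ne_of_gt hlogb_pos), Real.log_inv]
  have hlogr' : Real.log r = -(L * Real.log ((q : ℝ) ^ 2)) := by linarith
  have hrN : r ^ N ≤ (((q : ℝ) ^ 2) ^ k)⁻¹ := by
    have h1 : r ^ ((N : ℝ)) ≤ r ^ ((k : ℝ) / L) :=
      Real.rpow_le_rpow_of_exponent_ge hr0 hr1.le hNge
    have h2 : r ^ ((k : ℝ) / L) = (((q : ℝ) ^ 2) ^ k)⁻¹ := by
      rw [Real.rpow_def_of_pos hr0]
      have h3 : (k : ℝ) / L * Real.log r = -((k : ℝ) * Real.log ((q : ℝ) ^ 2)) := by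
        rw [hlogr']
        field_simp
      rw [mul_comm (Real.log r) ((k : ℝ) / L), h3, Real.exp_neg, Real.exp_nat_mul,
        Real.exp_log (by positivity)]
    calc r ^ N = r ^ ((N : ℝ)) := (Real.rpow_natCast r N).symm
      _ ≤ r ^ ((k : ℝ) / L) := h1
      _ = (((q : ℝ) ^ 2) ^ k)⁻¹ := h2
  have key : ((q : ℝ) ^ k - 1) * (q : ℝ) ^ k *
      (((q : ℝ) ^ 3 - q + 1) * ((q : ℝ) ^ (k - 2)) ^ 2) ^ N <
      ((q : ℝ) ^ k * (q : ℝ) ^ k) ^ N := by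
    have hpow : ((q : ℝ) ^ (k - 2)) ^ 2 * (q : ℝ) ^ 4 = (q : ℝ) ^ k * (q : ℝ) ^ k := by
      rw [← pow_mul, ← pow_add, ← pow_add]
      congr 1
      omega
    have hid : ((q : ℝ) ^ 3 - q + 1) * ((q : ℝ) ^ (k - 2)) ^ 2 =
        r * ((q : ℝ) ^ k * (q : ℝ) ^ k) := by
      rw [hr, div_mul_eq_mul_div, eq_div_iff (ne_of_gt hq4), mul_assoc, hpow]
    rw [hid, mul_pow]
    have hX : (0 : ℝ) < ((q : ℝ) ^ k * (q : ℝ) ^ k) ^ N := by positivity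
    have hqk0 : (0 : ℝ) < (q : ℝ) ^ k := by positivity
    have hqk1 : (1 : ℝ) ≤ (q : ℝ) ^ k := one_le_pow₀ (by linarith)
    have hnonneg : (0 : ℝ) ≤ ((q : ℝ) ^ k - 1) * (q : ℝ) ^ k :=
      mul_nonneg (by linarith) (le_of_lt hqk0)
    have hmain : ((q : ℝ) ^ k - 1) * (q : ℝ) ^ k * r ^ N < 1 := by
      have h3 : ((q : ℝ) ^ k - 1) * (q : ℝ) ^ k * r ^ N ≤
          ((q : ℝ) ^ k - 1) * (q : ℝ) ^ k * (((q : ℝ) ^ 2) ^ k)⁻¹ := by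
        nlinarith [mul_nonneg hnonneg (sub_nonneg.2 hrN)]
      have h4 : ((q : ℝ) ^ 2) ^ k = (q : ℝ) ^ k * (q : ℝ) ^ k := by
        rw [← pow_mul, ← pow_add]
        congr 1
        omega
      have h5 : ((q : ℝ) ^ k - 1) * (q : ℝ) ^ k * ((q : ℝ) ^ k * (q : ℝ) ^ k)⁻¹ < 1 := by
        have heq : ((q : ℝ) ^ k - 1) * (q : ℝ) ^ k * ((q : ℝ) ^ k * (q : ℝ) ^ k)⁻¹ =
            ((q : ℝ) ^ k - 1) / (q : ℝ) ^ k := by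
          field_simp
        rw [heq]
        exact (div_lt_one hqk0).2 (by linarith)
      calc ((q : ℝ) ^ k - 1) * (q : ℝ) ^ k * r ^ N ≤ _ := h3
        _ = ((q : ℝ) ^ k - 1) * (q : ℝ) ^ k * ((q : ℝ) ^ k * (q : ℝ) ^ k)⁻¹ := by rw [h4]
        _ < 1 := h5
    calc ((q : ℝ) ^ k - 1) * (q : ℝ) ^ k * (r ^ N * ((q : ℝ) ^ k * (q : ℝ) ^ k) ^ N)
        = (((q : ℝ) ^ k - 1) * (q : ℝ) ^ k * r ^ N) * ((q : ℝ) ^ k * (q : ℝ) ^ k) ^ N := by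
          ring
      _ < 1 * ((q : ℝ) ^ k * (q : ℝ) ^ k) ^ N := mul_lt_mul_of_pos_right hmain hX
      _ = ((q : ℝ) ^ k * (q : ℝ) ^ k) ^ N := one_mul _
  have hNineq : (q ^ k - 1) * q ^ k * ((q ^ 3 - q + 1) * (q ^ (k - 2)) ^ 2) ^ N <
      (q ^ k * q ^ k) ^ N := by
    have h1 : (1 : ℕ) ≤ q ^ k := Nat.one_le_pow _ _ (by omega)
    have h2 : q ≤ q ^ 3 := Nat.le_self_pow (by norm_num) q
    have hcastL : (((q ^ k - 1) * q ^ k * ((q ^ 3 - q + 1) * (q ^ (k - 2)) ^ 2) ^ N : ℕ) : ℝ) =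
        ((q : ℝ) ^ k - 1) * (q : ℝ) ^ k *
          (((q : ℝ) ^ 3 - (q : ℝ) + 1) * ((q : ℝ) ^ (k - 2)) ^ 2) ^ N := by
      push_cast [Nat.cast_sub h1, Nat.cast_sub h2]
      ring
    have hcastR : (((q ^ k * q ^ k) ^ N : ℕ) : ℝ) = ((q : ℝ) ^ k * (q : ℝ) ^ k) ^ N := by
      push_cast
      ring
    rw [← Nat.cast_lt (α := ℝ), hcastL, hcastR]
    exact key
  obtain ⟨t, ht⟩ := StrongBlocking.exists_good_tuple (F := F) (k := k) N
    (by rw [hcard]; exact hNineq)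
  obtain ⟨B, hBcard, hB0, hBprop, hBspan⟩ :=
    StrongBlocking.exists_B (by rw [hcard]; exact hq2) hk t ht
  refine ⟨B, ?_, hB0, hBprop, hBspan⟩
  rw [hcard] at hBcard
  calc (B.card : ℤ) ≤ ((N * (q + 1) : ℕ) : ℤ) := by exact_mod_cast hBcard
    _ = (N : ℤ) * ((q : ℤ) + 1) := by push_cast; ring
    _ = ⌈(k : ℝ) / L⌉ * ((q : ℤ) + 1) := by rw [hNZ]
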